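/- With Θ, E, P, D and f as in the formal Laurent series construction of f₃ (namely Θ = ∑_{n∈ℤ} X^{n²}, E = 1 − 264·∑_{n≥1} σ₉(n)X^{4n}, P = X⁴·∏_{n≥1}(1 − X^{4n})²⁴, D(∑aₙXⁿ) = ∑n·aₙXⁿ, and f = −(1/20)·(((1/2)·Θ·(DE) − 10·E·(DΘ))·P⁻¹ + 608·Θ)), the Laurent series F = 2·f + 248·Θ has coefficients of X⁻³, X⁰, X¹, X⁴, X⁵, X⁸, X⁹, X¹², X¹³, X¹⁶ equal respectively to 2, 248, 0, 54000, −171990, 3414528, −8192000, 88660992, −183902292, 1417878000, and its coefficient of Xⁿ vanishes for n < −3 and for −3 ≤ n ≤ 16 with n ≡ 2 or 3 (mod 4). -/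

import Mathlib

noncomputable section

/-- The product (coefficientwise) topology on `ℚ[[X]]`; since `ℚ` is discrete this
coincides with the `X`-adic topology. -/
instance : TopologicalSpace (PowerSeries ℚ) :=
  @Pi.topologicalSpace (Unit →₀ ℕ) (fun _ => ℚ) (fun _ => ⊥)

open PowerSeries

/-- `Θ = ∑_{n ∈ ℤ} X^{n²}`. -/
def Theta : PowerSeries ℚ := ∑' n : ℤ, (X : PowerSeries ℚ) ^ (n.natAbs ^ 2)

/-- `E = 1 - 264 ∑_{n ≥ 1} σ₉(n) X^{4n}`, where `σ₉(n)` is the sum of the 9th powers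
of the positive divisors of `n`. -/
def Eseries : PowerSeries ℚ :=
  1 - 264 * ∑' n : ℕ, ((∑ d ∈ (n + 1).divisors, d ^ 9 : ℕ) : ℚ) •
      (X : PowerSeries ℚ) ^ (4 * (n + 1))

/-- `P = X⁴ ∏_{n ≥ 1} (1 - X^{4n})²⁴`, the infinite product taken in the topology
above. -/
def Pseries : PowerSeries ℚ :=
  X ^ 4 * ∏' n : ℕ, (1 - (X : PowerSeries ℚ) ^ (4 * (n + 1))) ^ 24

/-- The ring embedding of `ℚ[[X]]` into the field of formal Laurent series `ℚ((X))`. -/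
def toLaurent : PowerSeries ℚ →+* LaurentSeries ℚ := HahnSeries.ofPowerSeries ℤ ℚ

/-- The derivation `D(∑ aₙ Xⁿ) = ∑ n aₙ Xⁿ` on Laurent series. -/
def Dop (f : LaurentSeries ℚ) : LaurentSeries ℚ :=
  ⟨fun n => (n : ℚ) * f.coeff n,
    f.isPWO_support.mono (by
      intro n hn
      simp only [Function.mem_support, ne_eq] at hn ⊢
      exact fun h => hn (by rw [h, mul_zero]))⟩

/-- The Laurent series
`f = -(1/20) (((1/2) Θ (DE) - 10 E (DΘ)) P⁻¹ + 608 Θ)`,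
i.e. Zagier's weight one-half form `f₃`, as a formal Laurent series. -/
def fThree : LaurentSeries ℚ :=
  -(1 / 20 : LaurentSeries ℚ) *
    (((1 / 2 : LaurentSeries ℚ) * toLaurent Theta * Dop (toLaurent Eseries) -
        10 * toLaurent Eseries * Dop (toLaurent Theta)) * (toLaurent Pseries)⁻¹ +
      608 * toLaurent Theta)

/-- `ℱ₃ = 2 f₃ + 248 Θ` as a formal Laurent series. -/
def Fcal : LaurentSeries ℚ := 2 * fThree + 248 * toLaurent Theta

/-! ### Auxiliary infrastructure -/

open Filter Finset

instance : T2Space (PowerSeries ℚ) :=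
  @Pi.t2Space (Unit →₀ ℕ) (fun _ => ℚ) (fun _ => ⊥)
    (fun _ => by
      letI : TopologicalSpace ℚ := ⊥
      haveI : DiscreteTopology ℚ := ⟨rfl⟩
      infer_instance)

lemma apply_eq_coeff (φ : PowerSeries ℚ) (x : Unit →₀ ℕ) :
    (φ : (Unit →₀ ℕ) → ℚ) x = coeff (x ()) φ := by
  conv_lhs => rw [Finsupp.unique_single x]
  rfl

lemma tendsto_coeff {ι : Type*} {F : Finset ι → PowerSeries ℚ} {g : PowerSeries ℚ}
    (h : ∀ d : ℕ, ∃ T : Finset ι, ∀ S : Finset ι, T ⊆ S → coeff d (F S) = coeff d g) :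
    Tendsto F atTop (nhds g) := by
  refine (@tendsto_pi_nhds (Finset ι) (Unit →₀ ℕ) (fun _ => ℚ) (fun _ => ⊥) F g atTop).2 ?_
  intro x
  rw [@nhds_discrete ℚ ⊥ (@DiscreteTopology.mk ℚ ⊥ rfl), Filter.tendsto_pure]
  obtain ⟨T, hT⟩ := h (x ())
  rw [eventually_atTop]
  exact ⟨T, fun S hS => by
    rw [show (F S : (Unit →₀ ℕ) → ℚ) x = g x ↔ coeff (x ()) (F S) = coeff (x ()) g by
      rw [apply_eq_coeff (F S) x, apply_eq_coeff g x]]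
    exact hT S hS⟩

lemma hasSum_PS {ι : Type*} {f : ι → PowerSeries ℚ} {g : PowerSeries ℚ}
    (h : ∀ d : ℕ, ∃ T : Finset ι, (∀ i ∉ T, coeff d (f i) = 0) ∧
      ∑ i ∈ T, coeff d (f i) = coeff d g) : HasSum f g := by
  refine tendsto_coeff (fun d => ?_)
  obtain ⟨T, h0, hs⟩ := h d
  refine ⟨T, fun S hS => ?_⟩
  rw [map_sum, ← hs]
  exact (Finset.sum_subset hS (fun i _ hi => h0 i hi)).symm

lemma hasProd_PS {f : ℕ → PowerSeries ℚ} {g : PowerSeries ℚ}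
    (h : ∀ d : ℕ, ∃ T : Finset ℕ, ∀ S : Finset ℕ, T ⊆ S →
      coeff d (∏ i ∈ S, f i) = coeff d g) : HasProd f g :=
  tendsto_coeff h

/-! ### Integer coefficient tables and convolution -/

def zcnv (a b : ℕ → ℤ) (n : ℕ) : ℤ := ∑ i ∈ range (n + 1), a i * b (n - i)

def cq (a : ℕ → ℤ) : ℕ → ℚ := fun d => (a d : ℚ)

def cnv (a b : ℕ → ℚ) (n : ℕ) : ℚ := ∑ i ∈ range (n + 1), a i * b (n - i)

lemma mk_mul_mk (a b : ℕ → ℚ) : (mk a : PowerSeries ℚ) * mk b = mk (cnv a b) := by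
  ext n
  rw [coeff_mul, coeff_mk, cnv, Finset.Nat.sum_antidiagonal_eq_sum_range_succ_mk]
  simp only [coeff_mk]

lemma cnv_cq (a b : ℕ → ℤ) : cnv (cq a) (cq b) = cq (zcnv a b) := by
  funext d
  simp only [cnv, zcnv, cq]
  push_cast
  rfl

lemma mk_cq_mul (a b : ℕ → ℤ) :
    (mk (cq a) : PowerSeries ℚ) * mk (cq b) = mk (cq (zcnv a b)) := by
  rw [mk_mul_mk, cnv_cq]

abbrev AgrZ (a b : ℕ → ℤ) : Prop := ∀ d, d < 21 → a d = b d

lemma AgrZ_trans {a b c : ℕ → ℤ} (h1 : AgrZ a b) (h2 : AgrZ b c) : AgrZ a c :=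
  fun d hd => (h1 d hd).trans (h2 d hd)

lemma AgrZ_zcnv {a a' b b' : ℕ → ℤ} (ha : AgrZ a a') (hb : AgrZ b b') :
    AgrZ (zcnv a b) (zcnv a' b') := by
  intro d hd
  refine Finset.sum_congr rfl fun i hi => ?_
  rw [mem_range] at hi
  rw [ha i (by omega), hb (d - i) (by omega)]

/-! ### Identification of Θ -/

def tZ (d : ℕ) : ℤ := if Nat.sqrt d ^ 2 = d then (if d = 0 then 1 else 2) else 0

lemma theta_eq : Theta = mk (cq tZ) := by
  refine (hasSum_PS fun d => ?_).tsum_eq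
  by_cases hd : Nat.sqrt d ^ 2 = d
  · refine ⟨{(Nat.sqrt d : ℤ), -(Nat.sqrt d : ℤ)}, fun i hi => ?_, ?_⟩
    · rw [coeff_X_pow, if_neg]
      intro h
      apply hi
      have h1 : i.natAbs = Nat.sqrt d := by
        have := congrArg Nat.sqrt h.symm
        rwa [Nat.sqrt_eq'] at this
      simp only [mem_insert, mem_singleton]
      rcases Int.natAbs_eq i with h2 | h2
      · exact Or.inl (by rw [h2, h1])
      · exact Or.inr (by rw [h2, h1])
    · by_cases h0 : d = 0
      · subst h0
        simp [tZ, cq, Finset.filter_singleton]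
      · have hs : Nat.sqrt d ≠ 0 := fun h => h0 (by rw [← hd, h]; ring)
        rw [Finset.sum_insert (by
          simp only [mem_singleton]
          intro h
          exact hs (by omega))]
        rw [Finset.sum_singleton, coeff_X_pow, coeff_X_pow]
        simp only [Int.natAbs_natCast, Int.natAbs_neg, hd, if_pos rfl, coeff_mk, cq, tZ,
          if_pos hd, if_neg h0]
        norm_num
  · refine ⟨∅, fun i _ => ?_, by simp [tZ, cq, hd]⟩
    rw [coeff_X_pow, if_neg]
    intro h
    apply hd
    have := congrArg Nat.sqrt h
    rw [Nat.sqrt_eq'] at this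
    rw [this, ← h]

/-! ### Identification of E -/

def sig9 (n : ℕ) : ℕ := ∑ d ∈ n.divisors, d ^ 9

def eZ (d : ℕ) : ℤ := if d = 0 then 1 else if d % 4 = 0 then -264 * (sig9 (d / 4) : ℤ) else 0

def sC (d : ℕ) : ℚ := if d ≠ 0 ∧ d % 4 = 0 then (sig9 (d / 4) : ℚ) else 0

lemma sum_eq : (∑' n : ℕ, ((∑ d ∈ (n + 1).divisors, d ^ 9 : ℕ) : ℚ) •
      (X : PowerSeries ℚ) ^ (4 * (n + 1))) = mk sC := by
  refine (hasSum_PS fun d => ?_).tsum_eq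
  by_cases hd : d ≠ 0 ∧ d % 4 = 0
  · refine ⟨{d / 4 - 1}, fun i hi => ?_, ?_⟩
    · rw [coeff_smul, coeff_X_pow, if_neg, smul_zero]
      simp only [mem_singleton] at hi
      omega
    · rw [Finset.sum_singleton, show d / 4 - 1 + 1 = d / 4 by omega,
        coeff_smul, coeff_X_pow, if_pos (by omega), coeff_mk, sC, if_pos hd]
      simp [sig9, smul_eq_mul]
  · refine ⟨∅, fun i _ => ?_, by simp [sC, hd]⟩
    rw [coeff_smul, coeff_X_pow, if_neg (by omega), smul_zero]

lemma eseries_eq : Eseries = mk (cq eZ) := by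
  rw [Eseries, sum_eq]
  ext d
  rw [map_sub, coeff_one]
  rw [show (264 : PowerSeries ℚ) = C (R := ℚ) 264 from (map_ofNat (C (R := ℚ)) 264).symm, coeff_C_mul,
    coeff_mk, coeff_mk]
  simp only [eZ, sC, cq]
  by_cases h0 : d = 0
  · simp [h0]
  · by_cases h4 : d % 4 = 0 <;> simp [h0, h4]

/-! ### Identification of the infinite product -/

def oneSubZ (m : ℕ) (d : ℕ) : ℤ := if d = 0 then 1 else if d = m then -1 else 0

lemma one_sub_eq (m : ℕ) (hm : m ≠ 0) :
    (1 - X ^ m : PowerSeries ℚ) = mk (cq (oneSubZ m)) := by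
  ext d
  rw [map_sub, coeff_one, coeff_X_pow, coeff_mk]
  simp only [oneSubZ, cq]
  by_cases h0 : d = 0
  · subst h0
    simp [Ne.symm hm]
  · by_cases hdm : d = m <;> simp [h0, hdm, hm]

def pow6Z (c : ℕ → ℤ) : ℕ → ℤ := zcnv (zcnv (zcnv c c) (zcnv c c)) (zcnv c c)

def pow24Z (c : ℕ → ℤ) : ℕ → ℤ :=
  zcnv (zcnv (pow6Z c) (pow6Z c)) (zcnv (pow6Z c) (pow6Z c))

lemma mk_pow24 (c : ℕ → ℤ) :
    (mk (cq c) : PowerSeries ℚ) ^ 24 = mk (cq (pow24Z c)) := by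
  have h6 : (mk (cq c) : PowerSeries ℚ) ^ 6 = mk (cq (pow6Z c)) := by
    have h : (mk (cq c) : PowerSeries ℚ) ^ 6 =
        ((mk (cq c) * mk (cq c)) * (mk (cq c) * mk (cq c))) * (mk (cq c) * mk (cq c)) := by
      ring
    rw [h]
    simp only [mk_cq_mul]
    rfl
  have h : (mk (cq c) : PowerSeries ℚ) ^ 24 =
      ((mk (cq c) ^ 6 * mk (cq c) ^ 6) * (mk (cq c) ^ 6 * mk (cq c) ^ 6)) := by ring
  rw [h, h6]
  simp only [mk_cq_mul]
  rfl

lemma fP_eq (i : ℕ) : ((1 - (X : PowerSeries ℚ) ^ (4 * (i + 1))) ^ 24 : PowerSeries ℚ) =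
    mk (cq (pow24Z (oneSubZ (4 * (i + 1))))) := by
  rw [one_sub_eq _ (by omega), mk_pow24]

def bigZ : ℕ → ℤ :=
  zcnv (zcnv (zcnv (zcnv (pow24Z (oneSubZ 4)) (pow24Z (oneSubZ 8))) (pow24Z (oneSubZ 12)))
    (pow24Z (oneSubZ 16))) (pow24Z (oneSubZ 20))

lemma prod5 : (∏ i ∈ range 5, (1 - (X : PowerSeries ℚ) ^ (4 * (i + 1))) ^ 24) =
    mk (cq bigZ) := by
  rw [Finset.prod_range_succ, Finset.prod_range_succ, Finset.prod_range_succ,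
    Finset.prod_range_succ, Finset.prod_range_one]
  rw [fP_eq 0, fP_eq 1, fP_eq 2, fP_eq 3, fP_eq 4]
  norm_num
  simp only [mk_cq_mul]
  rfl

lemma X_pow_dvd_factor (i k : ℕ) (hk : k ≤ 4 * (i + 1)) :
    (X : PowerSeries ℚ) ^ k ∣ (1 - (X : PowerSeries ℚ) ^ (4 * (i + 1))) ^ 24 - 1 := by
  have h1 : (X : PowerSeries ℚ) ^ (4 * (i + 1)) ∣
      (1 - (X : PowerSeries ℚ) ^ (4 * (i + 1))) ^ 24 - 1 := by
    have h := sub_dvd_pow_sub_pow (1 - (X : PowerSeries ℚ) ^ (4 * (i + 1))) 1 24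
    rw [one_pow] at h
    rw [show (1 - (X : PowerSeries ℚ) ^ (4 * (i + 1))) - 1 = -(X ^ (4 * (i + 1))) by ring] at h
    exact (neg_dvd).mp h
  exact dvd_trans (pow_dvd_pow X hk) h1

lemma prod_sub_one (R : Finset ℕ) (k : ℕ)
    (h : ∀ i ∈ R, (X : PowerSeries ℚ) ^ k ∣ (1 - (X : PowerSeries ℚ) ^ (4 * (i + 1))) ^ 24 - 1) :
    (X : PowerSeries ℚ) ^ k ∣ (∏ i ∈ R, (1 - (X : PowerSeries ℚ) ^ (4 * (i + 1))) ^ 24) - 1 := by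
  classical
  induction R using Finset.induction with
  | empty => simp
  | @insert a s ha ih =>
    rw [Finset.prod_insert ha]
    have h1 := h a (Finset.mem_insert_self a s)
    have h2 := ih (fun i hi => h i (Finset.mem_insert_of_mem hi))
    have key : (1 - (X : PowerSeries ℚ) ^ (4 * (a + 1))) ^ 24 *
        (∏ i ∈ s, (1 - (X : PowerSeries ℚ) ^ (4 * (i + 1))) ^ 24) - 1 =
        ((1 - (X : PowerSeries ℚ) ^ (4 * (a + 1))) ^ 24 - 1) *
          (∏ i ∈ s, (1 - (X : PowerSeries ℚ) ^ (4 * (i + 1))) ^ 24) +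
        ((∏ i ∈ s, (1 - (X : PowerSeries ℚ) ^ (4 * (i + 1))) ^ 24) - 1) := by ring
    rw [key]
    exact dvd_add (h1.mul_right _) h2

lemma coeff_prod_subset (d : ℕ) (T S : Finset ℕ) (hTS : T ⊆ S)
    (h : ∀ i ∈ S \ T, d + 1 ≤ 4 * (i + 1)) :
    coeff d (∏ i ∈ S, (1 - (X : PowerSeries ℚ) ^ (4 * (i + 1))) ^ 24) =
    coeff d (∏ i ∈ T, (1 - (X : PowerSeries ℚ) ^ (4 * (i + 1))) ^ 24) := by
  obtain ⟨c, hc⟩ := prod_sub_one (S \ T) (d + 1)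
    (fun i hi => X_pow_dvd_factor i (d + 1) (h i hi))
  have hprod : (∏ i ∈ S, (1 - (X : PowerSeries ℚ) ^ (4 * (i + 1))) ^ 24) =
      (∏ i ∈ T, (1 - (X : PowerSeries ℚ) ^ (4 * (i + 1))) ^ 24) +
      X ^ (d + 1) * (c * ∏ i ∈ T, (1 - (X : PowerSeries ℚ) ^ (4 * (i + 1))) ^ 24) := by
    rw [← Finset.prod_sdiff hTS, sub_eq_iff_eq_add.mp hc]
    ring
  rw [hprod, map_add, PowerSeries.X_pow_dvd_iff.mp (dvd_mul_right _ _) d (lt_add_one d),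
    add_zero]

def Qs : PowerSeries ℚ :=
  mk fun d => coeff d (∏ i ∈ range (d + 1), (1 - (X : PowerSeries ℚ) ^ (4 * (i + 1))) ^ 24)

lemma hasProd_fP :
    HasProd (fun i => (1 - (X : PowerSeries ℚ) ^ (4 * (i + 1))) ^ 24) Qs := by
  refine hasProd_PS fun d => ⟨range (d + 1), fun S hS => ?_⟩
  have h1 : coeff d Qs =
      coeff d (∏ i ∈ range (d + 1), (1 - (X : PowerSeries ℚ) ^ (4 * (i + 1))) ^ 24) :=
    coeff_mk _ _
  rw [h1]
  exact coeff_prod_subset d (range (d + 1)) S hS (by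
    intro i hi
    simp only [Finset.mem_sdiff, mem_range] at hi
    omega)

lemma pseries_eq : Pseries = X ^ 4 * Qs := by
  rw [Pseries, hasProd_fP.tprod_eq]

lemma coeff_Qs_tab : ∀ d, d < 21 → coeff d Qs = (bigZ d : ℚ) := by
  intro d hd
  have h1 : coeff d Qs =
      coeff d (∏ i ∈ range (d + 1), (1 - (X : PowerSeries ℚ) ^ (4 * (i + 1))) ^ 24) :=
    coeff_mk _ _
  rw [h1,
    ← coeff_prod_subset d (range (d + 1)) (range (d + 1) ∪ range 5) Finset.subset_union_left
      (by intro i hi; simp only [Finset.mem_sdiff, mem_union, mem_range] at hi; omega),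
    coeff_prod_subset d (range 5) (range (d + 1) ∪ range 5) Finset.subset_union_right
      (by intro i hi; simp only [Finset.mem_sdiff, mem_union, mem_range] at hi; omega),
    prod5, coeff_mk]
  rfl

/-! ### Tables -/

def Ts2_4 : ℕ → ℤ := fun d => if d = 0 then 1 else if d = 4 then -2 else if d = 8 then 1 else 0
def Ts4_4 : ℕ → ℤ := fun d => if d = 0 then 1 else if d = 4 then -4 else if d = 8 then 6 else if d = 12 then -4 else if d = 16 then 1 else 0
def Ts6_4 : ℕ → ℤ := fun d => if d = 0 then 1 else if d = 4 then -6 else if d = 8 then 15 else if d = 12 then -20 else if d = 16 then 15 else if d = 20 then -6 else 0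
def Ts12_4 : ℕ → ℤ := fun d => if d = 0 then 1 else if d = 4 then -12 else if d = 8 then 66 else if d = 12 then -220 else if d = 16 then 495 else if d = 20 then -792 else 0
def Ts24_4 : ℕ → ℤ := fun d => if d = 0 then 1 else if d = 4 then -24 else if d = 8 then 276 else if d = 12 then -2024 else if d = 16 then 10626 else if d = 20 then -42504 else 0
def Ts2_8 : ℕ → ℤ := fun d => if d = 0 then 1 else if d = 8 then -2 else if d = 16 then 1 else 0
def Ts4_8 : ℕ → ℤ := fun d => if d = 0 then 1 else if d = 8 then -4 else if d = 16 then 6 else 0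
def Ts6_8 : ℕ → ℤ := fun d => if d = 0 then 1 else if d = 8 then -6 else if d = 16 then 15 else 0
def Ts12_8 : ℕ → ℤ := fun d => if d = 0 then 1 else if d = 8 then -12 else if d = 16 then 66 else 0
def Ts24_8 : ℕ → ℤ := fun d => if d = 0 then 1 else if d = 8 then -24 else if d = 16 then 276 else 0
def Ts2_12 : ℕ → ℤ := fun d => if d = 0 then 1 else if d = 12 then -2 else 0
def Ts4_12 : ℕ → ℤ := fun d => if d = 0 then 1 else if d = 12 then -4 else 0
def Ts6_12 : ℕ → ℤ := fun d => if d = 0 then 1 else if d = 12 then -6 else 0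
def Ts12_12 : ℕ → ℤ := fun d => if d = 0 then 1 else if d = 12 then -12 else 0
def Ts24_12 : ℕ → ℤ := fun d => if d = 0 then 1 else if d = 12 then -24 else 0
def Ts2_16 : ℕ → ℤ := fun d => if d = 0 then 1 else if d = 16 then -2 else 0
def Ts4_16 : ℕ → ℤ := fun d => if d = 0 then 1 else if d = 16 then -4 else 0
def Ts6_16 : ℕ → ℤ := fun d => if d = 0 then 1 else if d = 16 then -6 else 0
def Ts12_16 : ℕ → ℤ := fun d => if d = 0 then 1 else if d = 16 then -12 else 0
def Ts24_16 : ℕ → ℤ := fun d => if d = 0 then 1 else if d = 16 then -24 else 0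
def Ts2_20 : ℕ → ℤ := fun d => if d = 0 then 1 else if d = 20 then -2 else 0
def Ts4_20 : ℕ → ℤ := fun d => if d = 0 then 1 else if d = 20 then -4 else 0
def Ts6_20 : ℕ → ℤ := fun d => if d = 0 then 1 else if d = 20 then -6 else 0
def Ts12_20 : ℕ → ℤ := fun d => if d = 0 then 1 else if d = 20 then -12 else 0
def Ts24_20 : ℕ → ℤ := fun d => if d = 0 then 1 else if d = 20 then -24 else 0
def pT_8 : ℕ → ℤ := fun d => if d = 0 then 1 else if d = 4 then -24 else if d = 8 then 252 else if d = 12 then -1448 else if d = 16 then 4278 else if d = 20 then -552 else 0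
def pT_12 : ℕ → ℤ := fun d => if d = 0 then 1 else if d = 4 then -24 else if d = 8 then 252 else if d = 12 then -1472 else if d = 16 then 4854 else if d = 20 then -6600 else 0
def pT_16 : ℕ → ℤ := fun d => if d = 0 then 1 else if d = 4 then -24 else if d = 8 then 252 else if d = 12 then -1472 else if d = 16 then 4830 else if d = 20 then -6024 else 0
def qT : ℕ → ℤ := fun d => if d = 0 then 1 else if d = 4 then -24 else if d = 8 then 252 else if d = 12 then -1472 else if d = 16 then 4830 else if d = 20 then -6048 else 0
def rT : ℕ → ℤ := fun d => if d = 0 then 1 else if d = 4 then 24 else if d = 8 then 324 else if d = 12 then 3200 else if d = 16 then 25650 else if d = 20 then 176256 else 0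

lemma A24_4 : AgrZ (pow24Z (oneSubZ 4)) Ts24_4 := by
  have h2 : AgrZ (zcnv (oneSubZ 4) (oneSubZ 4)) Ts2_4 := by decide
  have h4 : AgrZ (zcnv (zcnv (oneSubZ 4) (oneSubZ 4)) (zcnv (oneSubZ 4) (oneSubZ 4)))
      Ts4_4 := AgrZ_trans (AgrZ_zcnv h2 h2) (by decide : AgrZ (zcnv Ts2_4 Ts2_4) Ts4_4)
  have h6 : AgrZ (pow6Z (oneSubZ 4)) Ts6_4 :=
    AgrZ_trans (AgrZ_zcnv h4 h2) (by decide : AgrZ (zcnv Ts4_4 Ts2_4) Ts6_4)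
  have h12 : AgrZ (zcnv (pow6Z (oneSubZ 4)) (pow6Z (oneSubZ 4))) Ts12_4 :=
    AgrZ_trans (AgrZ_zcnv h6 h6) (by decide : AgrZ (zcnv Ts6_4 Ts6_4) Ts12_4)
  exact AgrZ_trans (AgrZ_zcnv h12 h12) (by decide : AgrZ (zcnv Ts12_4 Ts12_4) Ts24_4)

lemma A24_8 : AgrZ (pow24Z (oneSubZ 8)) Ts24_8 := by
  have h2 : AgrZ (zcnv (oneSubZ 8) (oneSubZ 8)) Ts2_8 := by decide
  have h4 : AgrZ (zcnv (zcnv (oneSubZ 8) (oneSubZ 8)) (zcnv (oneSubZ 8) (oneSubZ 8)))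
      Ts4_8 := AgrZ_trans (AgrZ_zcnv h2 h2) (by decide : AgrZ (zcnv Ts2_8 Ts2_8) Ts4_8)
  have h6 : AgrZ (pow6Z (oneSubZ 8)) Ts6_8 :=
    AgrZ_trans (AgrZ_zcnv h4 h2) (by decide : AgrZ (zcnv Ts4_8 Ts2_8) Ts6_8)
  have h12 : AgrZ (zcnv (pow6Z (oneSubZ 8)) (pow6Z (oneSubZ 8))) Ts12_8 :=
    AgrZ_trans (AgrZ_zcnv h6 h6) (by decide : AgrZ (zcnv Ts6_8 Ts6_8) Ts12_8)
  exact AgrZ_trans (AgrZ_zcnv h12 h12) (by decide : AgrZ (zcnv Ts12_8 Ts12_8) Ts24_8)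

lemma A24_12 : AgrZ (pow24Z (oneSubZ 12)) Ts24_12 := by
  have h2 : AgrZ (zcnv (oneSubZ 12) (oneSubZ 12)) Ts2_12 := by decide
  have h4 : AgrZ (zcnv (zcnv (oneSubZ 12) (oneSubZ 12)) (zcnv (oneSubZ 12) (oneSubZ 12)))
      Ts4_12 := AgrZ_trans (AgrZ_zcnv h2 h2) (by decide : AgrZ (zcnv Ts2_12 Ts2_12) Ts4_12)
  have h6 : AgrZ (pow6Z (oneSubZ 12)) Ts6_12 :=
    AgrZ_trans (AgrZ_zcnv h4 h2) (by decide : AgrZ (zcnv Ts4_12 Ts2_12) Ts6_12)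
  have h12 : AgrZ (zcnv (pow6Z (oneSubZ 12)) (pow6Z (oneSubZ 12))) Ts12_12 :=
    AgrZ_trans (AgrZ_zcnv h6 h6) (by decide : AgrZ (zcnv Ts6_12 Ts6_12) Ts12_12)
  exact AgrZ_trans (AgrZ_zcnv h12 h12) (by decide : AgrZ (zcnv Ts12_12 Ts12_12) Ts24_12)

lemma A24_16 : AgrZ (pow24Z (oneSubZ 16)) Ts24_16 := by
  have h2 : AgrZ (zcnv (oneSubZ 16) (oneSubZ 16)) Ts2_16 := by decide
  have h4 : AgrZ (zcnv (zcnv (oneSubZ 16) (oneSubZ 16)) (zcnv (oneSubZ 16) (oneSubZ 16)))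
      Ts4_16 := AgrZ_trans (AgrZ_zcnv h2 h2) (by decide : AgrZ (zcnv Ts2_16 Ts2_16) Ts4_16)
  have h6 : AgrZ (pow6Z (oneSubZ 16)) Ts6_16 :=
    AgrZ_trans (AgrZ_zcnv h4 h2) (by decide : AgrZ (zcnv Ts4_16 Ts2_16) Ts6_16)
  have h12 : AgrZ (zcnv (pow6Z (oneSubZ 16)) (pow6Z (oneSubZ 16))) Ts12_16 :=
    AgrZ_trans (AgrZ_zcnv h6 h6) (by decide : AgrZ (zcnv Ts6_16 Ts6_16) Ts12_16)
  exact AgrZ_trans (AgrZ_zcnv h12 h12) (by decide : AgrZ (zcnv Ts12_16 Ts12_16) Ts24_16)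

lemma A24_20 : AgrZ (pow24Z (oneSubZ 20)) Ts24_20 := by
  have h2 : AgrZ (zcnv (oneSubZ 20) (oneSubZ 20)) Ts2_20 := by decide
  have h4 : AgrZ (zcnv (zcnv (oneSubZ 20) (oneSubZ 20)) (zcnv (oneSubZ 20) (oneSubZ 20)))
      Ts4_20 := AgrZ_trans (AgrZ_zcnv h2 h2) (by decide : AgrZ (zcnv Ts2_20 Ts2_20) Ts4_20)
  have h6 : AgrZ (pow6Z (oneSubZ 20)) Ts6_20 :=
    AgrZ_trans (AgrZ_zcnv h4 h2) (by decide : AgrZ (zcnv Ts4_20 Ts2_20) Ts6_20)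
  have h12 : AgrZ (zcnv (pow6Z (oneSubZ 20)) (pow6Z (oneSubZ 20))) Ts12_20 :=
    AgrZ_trans (AgrZ_zcnv h6 h6) (by decide : AgrZ (zcnv Ts6_20 Ts6_20) Ts12_20)
  exact AgrZ_trans (AgrZ_zcnv h12 h12) (by decide : AgrZ (zcnv Ts12_20 Ts12_20) Ts24_20)

lemma AbigZ : AgrZ bigZ qT := by
  have b2 : AgrZ (zcnv (pow24Z (oneSubZ 4)) (pow24Z (oneSubZ 8))) pT_8 :=
    AgrZ_trans (AgrZ_zcnv A24_4 A24_8) (by decide : AgrZ (zcnv Ts24_4 Ts24_8) pT_8)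
  have b3 : AgrZ (zcnv (zcnv (pow24Z (oneSubZ 4)) (pow24Z (oneSubZ 8))) (pow24Z (oneSubZ 12)))
      pT_12 := AgrZ_trans (AgrZ_zcnv b2 A24_12) (by decide : AgrZ (zcnv pT_8 Ts24_12) pT_12)
  have b4 : AgrZ (zcnv (zcnv (zcnv (pow24Z (oneSubZ 4)) (pow24Z (oneSubZ 8)))
      (pow24Z (oneSubZ 12))) (pow24Z (oneSubZ 16))) pT_16 :=
    AgrZ_trans (AgrZ_zcnv b3 A24_16) (by decide : AgrZ (zcnv pT_12 Ts24_16) pT_16)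
  exact AgrZ_trans (AgrZ_zcnv b4 A24_20) (by decide : AgrZ (zcnv pT_16 Ts24_20) qT)

/-! ### The inverse of `Qs` -/

lemma coeff_Qs_qT : ∀ d, d < 21 → coeff d Qs = (qT d : ℚ) := by
  intro d hd
  rw [coeff_Qs_tab d hd, AbigZ d hd]

lemma constQ : constantCoeff Qs = 1 := by
  rw [← coeff_zero_eq_constantCoeff_apply, coeff_Qs_qT 0 (by norm_num)]
  norm_num [qT]

lemma qsinv : Qs * Qs⁻¹ = 1 :=
  PowerSeries.mul_inv_cancel _ (by rw [constQ]; norm_num)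

lemma cancelZero (g h : PowerSeries ℚ) (hg : constantCoeff g = 1)
    (hd : ∀ d, d < 21 → coeff d (g * h) = 0) : ∀ d, d < 21 → coeff d h = 0 := by
  intro d
  induction d using Nat.strong_induction_on with
  | _ d ih =>
    intro hdlt
    have h0 := hd d hdlt
    rw [coeff_mul, Finset.Nat.sum_antidiagonal_eq_sum_range_succ_mk] at h0
    rw [Finset.sum_eq_single 0 (fun b hb hb0 => by
        rw [ih (d - b) (by rw [mem_range] at hb; omega) (by omega), mul_zero])
      (fun hn => absurd (Finset.mem_range.mpr (by omega)) hn)] at h0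
    rw [Nat.sub_zero, coeff_zero_eq_constantCoeff_apply, hg, one_mul] at h0
    exact h0

lemma coeff_Qinv : ∀ d, d < 21 → coeff d Qs⁻¹ = (rT d : ℚ) := by
  have hQR : ∀ d, d < 21 → coeff d (Qs * mk (cq rT)) = coeff d 1 := by
    intro d hd
    rw [coeff_mul, Finset.Nat.sum_antidiagonal_eq_sum_range_succ_mk, coeff_one]
    have hterm : ∀ i ∈ range (d + 1),
        coeff i Qs * coeff (d - i) (mk (cq rT)) = ((qT i * rT (d - i) : ℤ) : ℚ) := by
      intro i hi
      rw [mem_range] at hi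
      rw [coeff_Qs_qT i (by omega), coeff_mk]
      push_cast [cq]
      ring
    rw [Finset.sum_congr rfl hterm, ← Int.cast_sum]
    have hz : (∑ i ∈ range (d + 1), qT i * rT (d - i)) = if d = 0 then 1 else 0 :=
      (by decide : ∀ d, d < 21 → zcnv qT rT d = if d = 0 then 1 else 0) d hd
    rw [hz]
    split_ifs <;> norm_num
  have hdiff : ∀ d, d < 21 → coeff d (Qs * (Qs⁻¹ - mk (cq rT))) = 0 := by
    intro d hd
    rw [mul_sub, map_sub, qsinv, hQR d hd, sub_self]
  intro d hd
  have h := cancelZero Qs (Qs⁻¹ - mk (cq rT)) constQ hdiff d hd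
  rw [map_sub, sub_eq_zero] at h
  rw [h, coeff_mk]
  rfl

/-! ### Laurent series layer -/

lemma tl_coeff (φ : PowerSeries ℚ) (m : ℕ) : (toLaurent φ).coeff (m : ℤ) = coeff m φ :=
  HahnSeries.ofPowerSeries_apply_coeff φ m

lemma tl_coeff_neg (φ : PowerSeries ℚ) (n : ℤ) (hn : n < 0) : (toLaurent φ).coeff n = 0 := by
  rw [toLaurent, HahnSeries.ofPowerSeries_apply]
  refine HahnSeries.embDomain_notin_range ?_
  rintro ⟨m, hm⟩
  simp at hm
  omega

def deZ (n : ℕ) : ℤ := (n : ℤ) * eZ n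
def dtZ (n : ℕ) : ℤ := (n : ℤ) * tZ n

lemma Dop_toLaurent (φ : PowerSeries ℚ) :
    Dop (toLaurent φ) = toLaurent (mk fun n => (n : ℚ) * coeff n φ) := by
  ext n
  have hD : (Dop (toLaurent φ)).coeff n = (n : ℚ) * (toLaurent φ).coeff n := rfl
  rw [hD]
  cases n with
  | ofNat m =>
    rw [show (Int.ofNat m) = (m : ℤ) from rfl, tl_coeff, tl_coeff, coeff_mk]
    push_cast
    ring
  | negSucc m =>
    rw [tl_coeff_neg _ _ (Int.negSucc_lt_zero m), tl_coeff_neg _ _ (Int.negSucc_lt_zero m),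
      mul_zero]

lemma dop_e : Dop (toLaurent (mk (cq eZ))) = toLaurent (mk (cq deZ)) := by
  rw [Dop_toLaurent]
  congr 1
  ext n
  rw [coeff_mk, coeff_mk, coeff_mk]
  push_cast [cq, deZ]
  ring

lemma dop_t : Dop (toLaurent (mk (cq tZ))) = toLaurent (mk (cq dtZ)) := by
  rw [Dop_toLaurent]
  congr 1
  ext n
  rw [coeff_mk, coeff_mk, coeff_mk]
  push_cast [cq, dtZ]
  ring

lemma hPinv : (toLaurent Pseries)⁻¹ =
    HahnSeries.single (-4 : ℤ) (1 : ℚ) * toLaurent Qs⁻¹ := by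
  refine inv_eq_of_mul_eq_one_right ?_
  rw [pseries_eq, map_mul]
  have hX : toLaurent (X ^ 4 : PowerSeries ℚ) = HahnSeries.single (4 : ℤ) 1 := by
    have := HahnSeries.ofPowerSeries_X_pow (Γ := ℤ) (R := ℚ) 4
    rw [toLaurent]
    rw [this]
    norm_num
  calc toLaurent (X ^ 4 : PowerSeries ℚ) * toLaurent Qs *
        (HahnSeries.single (-4 : ℤ) (1 : ℚ) * toLaurent Qs⁻¹)
      = (toLaurent (X ^ 4 : PowerSeries ℚ) * HahnSeries.single (-4 : ℤ) (1 : ℚ)) *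
        (toLaurent Qs * toLaurent Qs⁻¹) := by ring
    _ = 1 := by
        rw [hX, HahnSeries.single_mul_single, ← map_mul, qsinv, map_one]
        norm_num [HahnSeries.single_zero_one]

/-! ### Assembling `ℱ₃` -/

def Aps : PowerSeries ℚ :=
  C (R := ℚ) (1/2) * mk (cq tZ) * mk (cq deZ) - C (R := ℚ) 10 * mk (cq eZ) * mk (cq dtZ)

def Ups : PowerSeries ℚ := C (R := ℚ) 2 * (-(C (R := ℚ) (1/20)) * (Aps * Qs⁻¹))

def Vps : PowerSeries ℚ :=
  C (R := ℚ) 2 * (-(C (R := ℚ) (1/20)) * (C (R := ℚ) 608 * mk (cq tZ))) + C (R := ℚ) 248 * mk (cq tZ)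

lemma key : Fcal = HahnSeries.single (-4 : ℤ) (1 : ℚ) * toLaurent Ups + toLaurent Vps := by
  have h20 : (1 / 20 : LaurentSeries ℚ) = toLaurent (C (R := ℚ) (1/20)) := by
    have h : toLaurent (C (R := ℚ) (1/20)) * 20 = 1 := by
      rw [show (20 : LaurentSeries ℚ) = toLaurent (C (R := ℚ) 20) by simp [map_ofNat], ← map_mul,
        ← map_mul, show (1/20 : ℚ) * 20 = 1 by norm_num, map_one, map_one]
    exact (eq_one_div_of_mul_eq_one_left h).symm
  have h2 : (1 / 2 : LaurentSeries ℚ) = toLaurent (C (R := ℚ) (1/2)) := by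
    have h : toLaurent (C (R := ℚ) (1/2)) * 2 = 1 := by
      rw [show (2 : LaurentSeries ℚ) = toLaurent (C (R := ℚ) 2) by simp [map_ofNat], ← map_mul,
        ← map_mul, show (1/2 : ℚ) * 2 = 1 by norm_num, map_one, map_one]
    exact (eq_one_div_of_mul_eq_one_left h).symm
  rw [Fcal, fThree, theta_eq, eseries_eq, dop_e, dop_t, hPinv, h20, h2]
  rw [show (10 : LaurentSeries ℚ) = toLaurent (C (R := ℚ) 10) by simp [map_ofNat],
    show (608 : LaurentSeries ℚ) = toLaurent (C (R := ℚ) 608) by simp [map_ofNat],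
    show (2 : LaurentSeries ℚ) = toLaurent (C (R := ℚ) 2) by simp [map_ofNat],
    show (248 : LaurentSeries ℚ) = toLaurent (C (R := ℚ) 248) by simp [map_ofNat]]
  simp only [Ups, Vps, Aps, map_mul, map_add, map_neg, map_sub]
  ring

lemma Fcal_coeff_eq (n : ℤ) :
    Fcal.coeff n = (toLaurent Ups).coeff (n + 4) + (toLaurent Vps).coeff n := by
  rw [key, HahnSeries.coeff_add]
  congr 1
  have h := HahnSeries.coeff_single_mul_add (r := (1 : ℚ)) (x := toLaurent Ups) (a := n + 4) (b := -4)
  rw [show n + 4 + (-4 : ℤ) = n by ring] at h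
  rw [h, one_mul]

/-! ### Numerical evaluation -/

def A20 : ℕ → ℤ := fun i => 10 * zcnv tZ deZ i - 200 * zcnv eZ dtZ i

lemma coeff_Aps (i : ℕ) :
    coeff i Aps = ((10 * zcnv tZ deZ i - 200 * zcnv eZ dtZ i : ℤ) : ℚ) / 20 := by
  rw [Aps, map_sub, mul_assoc, mul_assoc, mk_cq_mul, mk_cq_mul, coeff_C_mul, coeff_C_mul,
    coeff_mk, coeff_mk]
  push_cast [cq]
  ring

lemma coeff_Ups (d : ℕ) (hd : d < 21) :
    coeff d Ups = -(((zcnv A20 rT d : ℤ) : ℚ) / 200) := by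
  have hsum : (∑ i ∈ range (d + 1), coeff i Aps * coeff (d - i) Qs⁻¹)
      = ((zcnv A20 rT d : ℤ) : ℚ) / 20 := by
    rw [zcnv]
    push_cast
    rw [Finset.sum_div]
    refine Finset.sum_congr rfl fun i hi => ?_
    rw [mem_range] at hi
    rw [coeff_Aps i, coeff_Qinv (d - i) (by omega)]
    push_cast [A20]
    ring
  rw [Ups, neg_mul, mul_neg, map_neg, coeff_C_mul, coeff_C_mul, coeff_mul,
    Finset.Nat.sum_antidiagonal_eq_sum_range_succ_mk, hsum]
  ring

lemma coeff_Vps (n : ℕ) : coeff n Vps = (936/5) * ((tZ n : ℤ) : ℚ) := by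
  rw [Vps, map_add, neg_mul, mul_neg, map_neg, coeff_C_mul, coeff_C_mul, coeff_C_mul,
    coeff_C_mul, coeff_mk]
  simp only [cq]
  ring

def tT : ℕ → ℤ := fun d =>
  if d = 0 then 1 else if d = 1 then 2 else if d = 4 then 2 else if d = 9 then 2 else
  if d = 16 then 2 else 0

lemma ttab : AgrZ tZ tT := by
  intro d hd
  interval_cases d <;> norm_num [tZ, tT]

def dtT : ℕ → ℤ := fun n => (n : ℤ) * tT n

lemma dttab : AgrZ dtZ dtT := by
  intro d hd
  rw [dtZ, dtT, ttab d hd]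

lemma AgrZ_refl (a : ℕ → ℤ) : AgrZ a a := fun _ _ => rfl

def A20T : ℕ → ℤ := fun i => 10 * zcnv tT deZ i - 200 * zcnv eZ dtT i

lemma a20tab : AgrZ A20 A20T := by
  intro d hd
  rw [A20, A20T, AgrZ_zcnv ttab (AgrZ_refl deZ) d hd, AgrZ_zcnv (AgrZ_refl eZ) dttab d hd]

def vT : ℕ → ℤ := fun d =>
  if d = 1 then -400 else if d = 4 then -12160 else if d = 5 then 74880 else
  if d = 8 then -10725120 else if d = 9 then 34398000 else
  if d = 12 then -682905600 else if d = 13 then 1638474880 else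
  if d = 16 then -17732198400 else if d = 17 then 36780458400 else
  if d = 20 then -283575525120 else 0

lemma vtab : ∀ d, d < 21 → zcnv A20 rT d = vT d := by
  intro d hd
  rw [AgrZ_zcnv a20tab (AgrZ_refl rT) d hd]
  exact (by decide : ∀ d, d < 21 → zcnv A20T rT d = vT d) d hd

lemma Fcal_nat (k : ℕ) (hk : k < 17) :
    Fcal.coeff (k : ℤ) = -(((vT (k + 4) : ℤ) : ℚ) / 200) + (936/5) * ((tT k : ℤ) : ℚ) := by
  rw [Fcal_coeff_eq, show ((k : ℤ) + 4) = ((k + 4 : ℕ) : ℤ) by push_cast; ring, tl_coeff,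
    tl_coeff, coeff_Ups (k + 4) (by omega), vtab (k + 4) (by omega), coeff_Vps,
    ttab k (by omega)]

lemma Fcal_negm (k : ℕ) (hk : k < 4) :
    Fcal.coeff ((k : ℤ) - 4) = -(((vT k : ℤ) : ℚ) / 200) := by
  rw [Fcal_coeff_eq, show ((k : ℤ) - 4 + 4) = ((k : ℕ) : ℤ) by ring, tl_coeff,
    coeff_Ups k (by omega), vtab k (by omega),
    tl_coeff_neg _ _ (by omega : (k : ℤ) - 4 < 0), add_zero]

theorem Fcal_coefficients :
    (∀ n : ℤ, n < -3 → Fcal.coeff n = 0) ∧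
    (∀ n : ℤ, -3 ≤ n → n ≤ 16 → (n % 4 = 2 ∨ n % 4 = 3) → Fcal.coeff n = 0) ∧
    Fcal.coeff (-3) = 2 ∧
    Fcal.coeff 0 = 248 ∧
    Fcal.coeff 1 = 0 ∧
    Fcal.coeff 4 = 54000 ∧
    Fcal.coeff 5 = -171990 ∧
    Fcal.coeff 8 = 3414528 ∧
    Fcal.coeff 9 = -8192000 ∧
    Fcal.coeff 12 = 88660992 ∧
    Fcal.coeff 13 = -183902292 ∧
    Fcal.coeff 16 = 1417878000 := by
  have hneg : ∀ k : ℕ, k < 4 → Fcal.coeff ((k : ℤ) - 4) = -(((vT k : ℤ) : ℚ) / 200) := Fcal_negm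
  have hnat : ∀ k : ℕ, k < 17 →
      Fcal.coeff (k : ℤ) = -(((vT (k + 4) : ℤ) : ℚ) / 200) + (936/5) * ((tT k : ℤ) : ℚ) :=
    Fcal_nat
  refine ⟨?_, ?_, ?_, ?_, ?_, ?_, ?_, ?_, ?_, ?_, ?_, ?_⟩
  · intro n hn
    rcases lt_or_eq_of_le (show n ≤ -4 by omega) with h | h
    · rw [Fcal_coeff_eq, tl_coeff_neg _ _ (by omega), tl_coeff_neg _ _ (by omega), add_zero]
    · subst h
      have := hneg 0 (by norm_num)
      norm_num [vT] at this
      exact this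
  · intro n h1 h2 h3
    interval_cases n
    · omega
    · have := hneg 2 (by norm_num); norm_num [vT] at this; exact this
    · have := hneg 3 (by norm_num); norm_num [vT] at this; exact this
    · omega
    · omega
    · have := hnat 2 (by norm_num); norm_num [vT, tT] at this; exact this
    · have := hnat 3 (by norm_num); norm_num [vT, tT] at this; exact this
    · omega
    · omega
    · have := hnat 6 (by norm_num); norm_num [vT, tT] at this; exact this
    · have := hnat 7 (by norm_num); norm_num [vT, tT] at this; exact this
    · omega
    · omega
    · have := hnat 10 (by norm_num); norm_num [vT, tT] at this; exact this
    · have := hnat 11 (by norm_num); norm_num [vT, tT] at this; exact this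
    · omega
    · omega
    · have := hnat 14 (by norm_num); norm_num [vT, tT] at this; exact this
    · have := hnat 15 (by norm_num); norm_num [vT, tT] at this; exact this
    · omega
  · have := hneg 1 (by norm_num)
    norm_num [vT] at this
    exact this
  · have := hnat 0 (by norm_num); norm_num [vT, tT] at this; exact this
  · have := hnat 1 (by norm_num); norm_num [vT, tT] at this; exact this
  · have := hnat 4 (by norm_num); norm_num [vT, tT] at this; exact this
  · have := hnat 5 (by norm_num); norm_num [vT, tT] at this; exact this
  · have := hnat 8 (by norm_num); norm_num [vT, tT] at this; exact this
  · have := hnat 9 (by norm_num); norm_num [vT, tT] at this; exact this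
  · have := hnat 12 (by norm_num); norm_num [vT, tT] at this; exact this
  · have := hnat 13 (by norm_num); norm_num [vT, tT] at this; exact this
  · have := hnat 16 (by norm_num); norm_num [vT, tT] at this; exact this

end
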